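/- Let G = (Ξ, Σ, Δ) be a grammar all of whose productions (X, w) satisfy |w↓Σ| ≤ 2 and |w↓Ξ| ≤ 2, and let k > 0. For each X ∈ Ξ, Y ∈ Ξ ∪ {ε} and γ ∈ Δ*: γ ∈ Γ^{df(k)}_{X,Y}(G) if and only if the labeled graph A^{df(k)}_G contains a path from the vertex X^⟨0⟩ to the vertex Y^⟨0⟩ (to the empty ranked word when Y = ε) whose sequence of edge labels is γ. -/

import Mathlib

namespace Paper

/-- A word over nonterminals `N` and terminals `T`. -/
abbrev Word (N T : Type) := List (N ⊕ T)

/-- A production of a grammar. -/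
abbrev CProd (N T : Type) := N × Word N T

/-- A grammar, given by its set of productions. -/
structure CFG (N T : Type) where
  prods : Set (CProd N T)

variable {N T : Type}

/-- number of occurrences of nonterminals in a word -/
def ntCount (u : Word N T) : ℕ := (u.filter (fun s => s.isLeft)).length

/-- number of occurrences of terminals in a word -/
def tCount (u : Word N T) : ℕ := (u.filter (fun s => s.isRight)).length

/-- the result of applying production `p` at position `j` of `u` -/
def applyProd (p : CProd N T) (j : ℕ) (u : Word N T) : Word N T :=
  u.take j ++ p.2 ++ u.drop (j + 1)

/-- `KSeq G k u γjs v`: a step sequence from `u` to `v` applying the indicated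
productions at the indicated positions, in which every word (including `u`, `v`)
has at most `k` occurrences of nonterminals (`k = ⊤` places no restriction). -/
inductive KSeq (G : CFG N T) (k : ℕ∞) : Word N T → List (CProd N T × ℕ) → Word N T → Prop
  | refl (u : Word N T) : (ntCount u : ℕ∞) ≤ k → KSeq G k u [] u
  | step {u v : Word N T} {p : CProd N T} {j : ℕ} {rest : List (CProd N T × ℕ)} :
      (ntCount u : ℕ∞) ≤ k → p ∈ G.prods → u[j]? = some (Sum.inl p.1) →
      KSeq G k (applyProd p j u) rest v → KSeq G k u ((p, j) :: rest) v

/-- words annotated with the index of the step at which each symbol occurrence appeared -/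
abbrev AWord (N T : Type) := List ((N ⊕ T) × ℕ)

def strip (u : AWord N T) : Word N T := u.map Prod.fst

def ntCountA (u : AWord N T) : ℕ := (u.filter (fun s => s.1.isLeft)).length

def applyProdA (p : CProd N T) (j m : ℕ) (u : AWord N T) : AWord N T :=
  u.take j ++ p.2.map (fun s => (s, m)) ++ u.drop (j + 1)

/-- the depth-first condition: position `j` carries a maximal first-appearance
index among the nonterminal occurrences of `u` -/
def dfOK (u : AWord N T) (j : ℕ) : Prop :=
  ∀ i x o, u[(i : ℕ)]? = some (Sum.inl x, o) → ∀ s oj, u[j]? = some (s, oj) → o ≤ oj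

/-- `DFSeq G k m u γjs v`: a `k`-index depth-first step sequence on annotated words,
where `m` is the index (in the whole sequence) of the current word `u`. -/
inductive DFSeq (G : CFG N T) (k : ℕ∞) : ℕ → AWord N T → List (CProd N T × ℕ) → AWord N T → Prop
  | refl (m : ℕ) (u : AWord N T) : (ntCountA u : ℕ∞) ≤ k → DFSeq G k m u [] u
  | step {m : ℕ} {u v : AWord N T} {p : CProd N T} {j o : ℕ} {rest : List (CProd N T × ℕ)} :
      (ntCountA u : ℕ∞) ≤ k → p ∈ G.prods → u[j]? = some (Sum.inl p.1, o) →
      dfOK u j →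
      DFSeq G k (m + 1) (applyProdA p j (m + 1) u) rest v →
      DFSeq G k m u ((p, j) :: rest) v

/-- `u ⇒^γ v` by a `k`-index step sequence (positions existentially quantified). -/
def CtrlSeq (G : CFG N T) (k : ℕ∞) (u : Word N T) (γ : List (CProd N T)) (v : Word N T) : Prop :=
  ∃ js : List ℕ, js.length = γ.length ∧ KSeq G k u (γ.zip js) v

/-- annotate a word as an initial word of a step sequence -/
def annot (u : Word N T) : AWord N T := u.map (fun s => (s, 0))

/-- `u ⇒^γ v` by a `k`-index depth-first step sequence starting at `u`. -/
def DFCtrlFrom (G : CFG N T) (k : ℕ∞) (u : Word N T) (γ : List (CProd N T)) (v : Word N T) :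
    Prop :=
  ∃ (js : List ℕ) (va : AWord N T),
    js.length = γ.length ∧ DFSeq G k 0 (annot u) (γ.zip js) va ∧ strip va = v

/-- embedding of terminal words -/
def tw (w : List T) : Word N T := w.map Sum.inr

/-- the sentential word `u Y v` where `u, v` are terminal and `Y` is an optional nonterminal -/
def sent (u : List T) (Y : Option N) (v : List T) : Word N T :=
  tw u ++ (Y.elim [] (fun y => [Sum.inl y])) ++ tw v

/-- `L^{(k)}_{X,Y}(G) = { u·v | X ⇒* u Y v by a k-index step sequence }`;
`Y = none` stands for `ε`. -/
def LKY (G : CFG N T) (k : ℕ∞) (X : N) (Y : Option N) : Set (List T) :=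
  {w | ∃ u v γ, w = u ++ v ∧ CtrlSeq G k [Sum.inl X] γ (sent u Y v)}

/-- `L_X(G)` -/
def Lang (G : CFG N T) (X : N) : Set (List T) := LKY G ⊤ X none

/-- `L^{(k)}_X(G)` -/
def LangK (G : CFG N T) (k : ℕ) (X : N) : Set (List T) := LKY G (k : ℕ∞) X none

/-- `Γ^{df(k)}_{X,Y}(G)`: control words of `k`-index depth-first step sequences `X ⇒^γ u Y v`. -/
def GammaDF (G : CFG N T) (k : ℕ) (X : N) (Y : Option N) : Set (List (CProd N T)) :=
  {γ | ∃ u v : List T, DFCtrlFrom G (k : ℕ∞) [Sum.inl X] γ (sent u Y v)}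

/-- `L̂_{X,Y}(Γ, G)` -/
def LHat (G : CFG N T) (Γ : Set (List (CProd N T))) (X : N) (Y : Option N) : Set (List T) :=
  {w | ∃ u v, w = u ++ v ∧ ∃ γ ∈ Γ, CtrlSeq G ⊤ [Sum.inl X] γ (sent u Y v)}

/-- the language of the bounded expression `w₁* ⋯ w_d*` -/
def BLang {α : Type} : List (List α) → Set (List α)
  | [] => {[]}
  | w :: ws => {u | ∃ (n : ℕ) (v : List α), v ∈ BLang ws ∧ u = (List.replicate n w).flatten ++ v}

/-- the words of a bounded expression must be nonempty -/
def IsBExpr {α : Type} (ws : List (List α)) : Prop := ∀ w ∈ ws, w ≠ []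

/-- the language of the letter-bounded expression `a₁* ⋯ a_d*` -/
def letterLang {α : Type} (as : List α) : Set (List α) := BLang (as.map (fun a => [a]))

/-- the language `a_i* ⋯ a_j*` (0-indexed segment of `as` from `i` to `j` inclusive) -/
def segLang {α : Type} (as : List α) (i j : ℕ) : Set (List α) :=
  letterLang ((as.drop i).take (j - i + 1))

end Paper

namespace Paper

variable {N T : Type}

/-- ranked words over the nonterminals -/
abbrev RW (N : Type) := List (N × ℕ)

/-- the set of rank values is downward closed (equivalently, of the form `{0, …, m}`
when nonempty) -/
def contiguousRanks (q : RW N) : Prop := ∀ p ∈ q, ∀ j ≤ p.2, ∃ x : N, (x, j) ∈ q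

/-- vertices of the graph `A^{df(k)}_G` -/
def IsVertex (k : ℕ) (q : RW N) : Prop :=
  q.length ≤ k ∧ contiguousRanks q ∧ List.Pairwise (· ≤ ·) (q.map Prod.snd)

/-- `w↓Ξ` : projection of a word to its nonterminals -/
def ntProj (w : Word N T) : List N := w.filterMap Sum.getLeft?

open Classical in
/-- the rank given to the nonterminals produced by a step rewriting a nonterminal
of maximal rank `i`, where `uv` is the rest of the ranked word -/
noncomputable def newRank (uv : RW N) (i : ℕ) : ℕ :=
  if uv = [] then 0 else if ∀ p ∈ uv, p.2 ≠ i then i else i + 1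

/-- the edge relation of the graph `A^{df(k)}_G` -/
def Edge (G : CFG N T) (k : ℕ) (q : RW N) (p : CProd N T) (q' : RW N) : Prop :=
  p ∈ G.prods ∧ IsVertex k q ∧ IsVertex k q' ∧
  ∃ (u v : RW N) (i : ℕ), q = u ++ [(p.1, i)] ++ v ∧ (∀ x ∈ q, x.2 ≤ i) ∧
    q' = u ++ v ++ (ntProj p.2).map (fun X => (X, newRank (u ++ v) i))

/-- paths in a labeled graph, recording the sequence of edge labels -/
inductive GPath {V E : Type} (edge : V → E → V → Prop) : V → List E → V → Prop
  | refl (v : V) : GPath edge v [] v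
  | step {v v' v'' : V} {e : E} {es : List E} :
      edge v e v' → GPath edge v' es v'' → GPath edge v (e :: es) v''

/-- paths recording the successive vertices as well -/
inductive VPath {V E : Type} (edge : V → E → V → Prop) : V → List (E × V) → Prop
  | refl (v : V) : VPath edge v []
  | step {v v' : V} {e : E} {rest : List (E × V)} :
      edge v e v' → VPath edge v' rest → VPath edge v ((e, v') :: rest)

/-- endpoint of a path starting at `q` -/
def pend {V E : Type} (q : V) (π : List (E × V)) : V := (π.map Prod.snd).getLastD q

/-- a path is acyclic iff it visits no vertex twice -/
def AcyclicFrom {V E : Type} (q : V) (π : List (E × V)) : Prop :=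
  (q :: π.map Prod.snd).Nodup

/-- `Decomp edge q pairs fin` asserts that the path obtained by concatenating, in order,
the segments of `pairs` (each an acyclic segment followed by a cycle) and `fin` is a valid
path from `q`, alternating acyclic segments `ς_j` and cycles `θ_j`. -/
def Decomp {V E : Type} (edge : V → E → V → Prop) :
    V → List (List (E × V) × List (E × V)) → List (E × V) → Prop
  | q, [], fin => VPath edge q fin ∧ AcyclicFrom q fin
  | q, (σ, θ) :: rest, fin =>
      VPath edge q σ ∧ AcyclicFrom q σ ∧
      VPath edge (pend q σ) θ ∧ pend (pend q σ) θ = pend q σ ∧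
      Decomp edge (pend q σ) rest fin

/-- `|γ|_a`: total number of occurrences of the terminal `a` in the right-hand
sides of the productions of the control word `γ` -/
def projCnt {A : Type} [DecidableEq A] (γ : List (CProd N A)) (a : A) : ℕ :=
  ((γ.map (fun p => p.2)).flatten.filterMap Sum.getRight?).count a

/-- `proj(γ) = a₁^{|γ|_{a₁}} ⋯ a_s^{|γ|_{a_s}}` -/
def projW {A : Type} [DecidableEq A] (as : List A) (γ : List (CProd N A)) : List A :=
  (as.map (fun a => List.replicate (projCnt γ a) a)).flatten

end Paper

namespace Paper

variable {N T : Type}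

/-- a grammar is in 2-normal form -/
def TwoNF (G : CFG N T) : Prop := ∀ p ∈ G.prods, p.2.length ≤ 2

/-- states of the automaton/grammar `G^b`: `(s, i)` encodes `q^{(s+1)}_{i+1}`,
i.e. position `i` (0-indexed) inside the block `s` (0-indexed) -/
abbrev QB : Type := ℕ × ℕ

/-- `ℓ_s`: length of the `s`-th word of the bounded expression -/
def lenB (ws : List (List T)) (s : ℕ) : ℕ := (ws.getD s []).length

/-- the `i`-th letter of the `s`-th word -/
def letterB (ws : List (List T)) (s i : ℕ) : Option T := (ws.getD s [])[i]?

/-- the productions of the grammar `G^b` generating the bounded expression `b` -/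
def DeltaB (ws : List (List T)) : Set (CProd QB T) :=
  {p | (∃ s i a, s < ws.length ∧ i + 1 < lenB ws s ∧ letterB ws s i = some a ∧
          p = ((s, i), [Sum.inr a, Sum.inl (s, i + 1)]))
     ∨ (∃ s s' a, s ≤ s' ∧ s' < ws.length ∧
          letterB ws s (lenB ws s - 1) = some a ∧
          p = ((s, lenB ws s - 1), [Sum.inr a, Sum.inl (s', 0)]))
     ∨ (∃ s, s < ws.length ∧ p = ((s, 0), ([] : Word QB T)))}

/-- the grammar `G^b` -/
def GB (ws : List (List T)) : CFG QB T := ⟨DeltaB ws⟩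

/-- nonterminals `[q X q']` of the product grammar `G^∩` -/
abbrev NI (N : Type) : Type := QB × N × QB

/-- `q ∈ Ξ^b` -/
def ValidQ (ws : List (List T)) (q : QB) : Prop :=
  q.1 < ws.length ∧ q.2 < lenB ws q.1

/-- `[q X q'] ∈ Ξ^∩`: both states valid and blocks in order -/
def ValidNI (ws : List (List T)) (n : NI N) : Prop :=
  ValidQ ws n.1 ∧ ValidQ ws n.2.2 ∧ n.1.1 ≤ n.2.2.1

/-- `q ⇒* w·q'` in `G^b` -/
def DerB (ws : List (List T)) (q : QB) (w : List T) (q' : QB) : Prop :=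
  ∃ γ, CtrlSeq (GB ws) ⊤ [Sum.inl q] γ (tw w ++ [Sum.inl q'])

/-- the productions `Δ^∩` of the product grammar `G^∩` -/
def DeltaI (G : CFG N T) (ws : List (List T)) : Set (CProd (NI N) T) :=
  {pp | ∃ (q q' : QB) (X : N), ValidNI ws (q, X, q') ∧
     ((∃ w : List T, (X, tw w) ∈ G.prods ∧ DerB ws q w q' ∧
         pp = ((q, X, q'), tw w)) ∨
      (∃ Y : N, (X, [Sum.inl Y]) ∈ G.prods ∧
         pp = ((q, X, q'), [Sum.inl ((q, Y, q') : NI N)])) ∨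
      (∃ (a : T) (Y : N) (qm : QB), (X, [Sum.inr a, Sum.inl Y]) ∈ G.prods ∧
         ((q, [Sum.inr a, Sum.inl qm]) : CProd QB T) ∈ DeltaB ws ∧ ValidNI ws (qm, Y, q') ∧
         pp = ((q, X, q'), [Sum.inr a, Sum.inl ((qm, Y, q') : NI N)])) ∨
      (∃ (a : T) (Y : N) (qm : QB), (X, [Sum.inl Y, Sum.inr a]) ∈ G.prods ∧
         ((qm, [Sum.inr a, Sum.inl q']) : CProd QB T) ∈ DeltaB ws ∧ ValidNI ws (q, Y, qm) ∧
         pp = ((q, X, q'), [Sum.inl ((q, Y, qm) : NI N), Sum.inr a])) ∨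
      (∃ (Y Z : N) (qm : QB), (X, [Sum.inl Y, Sum.inl Z]) ∈ G.prods ∧
         ValidNI ws (q, Y, qm) ∧ ValidNI ws (qm, Z, q') ∧
         pp = ((q, X, q'), [Sum.inl ((q, Y, qm) : NI N), Sum.inl ((qm, Z, q') : NI N)])))}

/-- the product grammar `G^∩` -/
def GI (G : CFG N T) (ws : List (List T)) : CFG (NI N) T := ⟨DeltaI G ws⟩

/-- `ζ` on symbols -/
def zetaS : (NI N ⊕ T) → (N ⊕ T) := Sum.map (fun n => n.2.1) id

/-- `ζ` on productions -/
def zetaP (p : CProd (NI N) T) : CProd N T := (p.1.2.1, p.2.map zetaS)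

/-- `ζ` on control words -/
def zetaC (γ : List (CProd (NI N) T)) : List (CProd N T) := γ.map zetaP

/-- the intermediate state of the (unique, shortest) two-step run of `G^b` from the
left state of `h` to its right state; when the first step wraps, the least possible
intermediate block is chosen -/
noncomputable def iotaMid (ws : List (List T)) (h : NI N) (a b : T) : QB :=
  if h.1.2 + 1 < lenB ws h.1.1 then (h.1.1, h.1.2 + 1)
  else (sInf {y : ℕ | (((h.1.1, h.1.2), [Sum.inr a, Sum.inl ((y, 0) : QB)]) : CProd QB T) ∈ DeltaB ws ∧
                (((y, 0), [Sum.inr b, Sum.inl (h.2.2 : QB)]) : CProd QB T) ∈ DeltaB ws}, 0)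

/-- `ι` on right-hand sides: relabels terminals by the indices (0-indexed) of the
blocks of `b` completed by the corresponding moves of `G^b`; `h` is the head of the
production -/
noncomputable def iotaRhs (ws : List (List T)) (h : NI N) :
    Word (NI N) T → Word (NI N) ℕ
  | [] => []
  | [Sum.inr _] => if h.2.2.2 = 0 then [Sum.inr h.1.1] else []
  | [Sum.inr a, Sum.inr b] =>
      (if (iotaMid ws h a b).2 = 0 then [Sum.inr h.1.1] else []) ++
      (if h.2.2.2 = 0 then [Sum.inr (iotaMid ws h a b).1] else [])
  | [Sum.inr _, Sum.inl m] => (if m.1.2 = 0 then [Sum.inr h.1.1] else []) ++ [Sum.inl m]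
  | [Sum.inl m, Sum.inr _] => [Sum.inl m] ++ (if h.2.2.2 = 0 then [Sum.inr m.2.2.1] else [])
  | other => other.map (Sum.map id (fun _ => 0))

/-- the map `ι : Δ^∩ → Δ^⋈` -/
noncomputable def iota (ws : List (List T)) (p : CProd (NI N) T) : CProd (NI N) ℕ :=
  (p.1, iotaRhs ws p.1 p.2)

/-- the grammar `G^⋈`, whose terminals are the (0-indexed) letters `a₁, …, a_d`
represented by natural numbers -/
noncomputable def GBow (G : CFG N T) (ws : List (List T)) : CFG (NI N) ℕ :=
  ⟨iota ws '' DeltaI G ws⟩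

end Paper

namespace Paper

variable {N A : Type}

/-- `Ξ̂`: nonterminals producing some word starting with `a₁` and some word ending
with `a_d` -/
def XiHat (G : CFG N A) (a1 ad : A) : Set N :=
  {Y | (∃ w ∈ Lang G Y, ∃ v, w = a1 :: v) ∧ (∃ w ∈ Lang G Y, ∃ v, w = v ++ [ad])}

/-- the grammar `G^♯` (here `S = Ξ̂`, and `Ξ̌` is its complement) -/
def GSharp (G : CFG N A) (S : Set N) : CFG N A :=
  ⟨{p | p ∈ G.prods ∧ p.1 ∉ S} ∪
   {p | p ∈ G.prods ∧ p.1 ∈ S ∧ ∃ (u : Word N A) (Xr : N) (v : Word N A),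
      Xr ∈ S ∧ p.2 = u ++ [Sum.inl Xr] ++ v}⟩

/-- the grammar `G_{i,w}` for a pivot production `piv` (here `S = Ξ̂`) -/
def GPivot (G : CFG N A) (S : Set N) (piv : CProd N A) : CFG N A :=
  ⟨{p | p ∈ G.prods ∧ p.1 ∉ S} ∪ {piv}⟩

/-- `G` is reduced for `X` -/
def Reduced (G : CFG N A) (X : N) : Prop :=
  ∀ Y : N, Y ≠ X → (LKY G ⊤ X (some Y)).Nonempty ∧ (Lang G Y).Nonempty

/-- `a₁* ⋯ a_d*` (given by the list `as`) is the minimal strict letter-bounded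
expression for `L_X(G)` -/
def MinimalLB (G : CFG N A) (X : N) (as : List A) : Prop :=
  Lang G X ⊆ letterLang as ∧ ∀ i < as.length, ¬ (Lang G X ⊆ letterLang (as.eraseIdx i))

/-- a symbol of `A ∪ {ε}` as a word -/
def optT (a : Option A) : Word N A := a.elim [] (fun x => [Sum.inr x])

/-- a symbol of `Ξ ∪ {ε}` as a word -/
def optN (y : Option N) : Word N A := y.elim [] (fun x => [Sum.inl x])

/-- `y ⇒^γ u_y` is a (possibly empty) `k`-index depth-first derivation, where
`y ∈ Ξ ∪ {ε}`; for `y = ε` the derivation is empty -/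
def optDFDer (H : CFG N A) (k : ℕ) (y : Option N) (γ : List (CProd N A)) : Prop :=
  match y with
  | some Y => ∃ w : List A, DFCtrlFrom H (k : ℕ∞) [Sum.inl Y] γ (tw w)
  | none => γ = []

/-- the grammar `G_k` with productions `X_i → X_{i-1} X_{i-1}` (1 ≤ i ≤ k) and `X_0 → a` -/
def Gk (k : ℕ) : CFG ℕ Unit :=
  ⟨{p | (∃ i, 1 ≤ i ∧ i ≤ k ∧ p = (i, [Sum.inl (i - 1), Sum.inl (i - 1)])) ∨
        p = (0, [Sum.inr ()])}⟩

end Paper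

namespace Paper

section Aux
variable {N T : Type}

/-- nonterminal occurrences of an annotated word, with their annotations -/
def nts (w : AWord N T) : List (N × ℕ) :=
  w.filterMap (fun s => match s.1 with | Sum.inl x => some (x, s.2) | Sum.inr _ => none)

lemma nts_nil : nts ([] : AWord N T) = [] := rfl

lemma nts_cons_inl (x : N) (a : ℕ) (w : AWord N T) :
    nts ((Sum.inl x, a) :: w) = (x, a) :: nts w := rfl

lemma nts_cons_inr (t : T) (a : ℕ) (w : AWord N T) :
    nts ((Sum.inr t, a) :: w) = nts w := rfl

lemma mem_nts {w : AWord N T} {x : N} {a : ℕ} : (x, a) ∈ nts w ↔ (Sum.inl x, a) ∈ w := by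
  constructor
  · intro h
    rcases List.mem_filterMap.1 h with ⟨⟨s, o⟩, hs, he⟩
    cases s with
    | inl y => simp only at he; cases he; exact hs
    | inr t => simp at he
  · intro h
    exact List.mem_filterMap.2 ⟨(Sum.inl x, a), h, rfl⟩

lemma nts_append (u v : AWord N T) : nts (u ++ v) = nts u ++ nts v :=
  List.filterMap_append

lemma ntCountA_eq (w : AWord N T) : ntCountA w = (nts w).length := by
  induction w with
  | nil => rfl
  | cons s w ih =>
    obtain ⟨s1 | s1, o⟩ := s
    · simp [ntCountA, nts_cons_inl, List.filter] at ih ⊢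
      simpa [ntCountA] using ih
    · simp [ntCountA, nts_cons_inr, List.filter] at ih ⊢
      simpa [ntCountA] using ih

lemma nts_map_annot (l : Word N T) (m : ℕ) :
    nts (l.map (fun s => (s, m))) = (ntProj l).map (fun X => (X, m)) := by
  induction l with
  | nil => rfl
  | cons s l ih =>
    cases s with
    | inl x => simp [nts_cons_inl, ntProj, ih]
    | inr t => simp [nts_cons_inr, ntProj, ih, List.filterMap_cons]

lemma nts_applyProdA (p : CProd N T) (j m : ℕ) (w : AWord N T) :
    nts (applyProdA p j m w) =
      nts (w.take j) ++ (ntProj p.2).map (fun X => (X, m)) ++ nts (w.drop (j + 1)) := by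
  simp [applyProdA, nts_append, nts_map_annot]

lemma decomp_at {α : Type} {l : List α} {j : ℕ} {s : α} (h : l[j]? = some s) :
    l = l.take j ++ s :: l.drop (j + 1) := by
  have hj : j < l.length := (List.getElem?_eq_some_iff.1 h).1
  have h5 : l[j] = s := by
    exact (List.getElem?_eq_some_iff.1 h).2
  conv_lhs => rw [← List.take_append_drop j l, List.drop_eq_getElem_cons hj, h5]

lemma mem_nts_exists_get {w : AWord N T} {x : N} {a : ℕ} (h : (x, a) ∈ nts w) :
    ∃ j : ℕ, w[j]? = some (Sum.inl x, a) :=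
  List.mem_iff_getElem?.1 (mem_nts.1 h)

lemma strip_append (u v : AWord N T) : strip (u ++ v) = strip u ++ strip v :=
  List.map_append

lemma ntProj_strip (w : AWord N T) : ntProj (strip w) = (nts w).map Prod.fst := by
  induction w with
  | nil => rfl
  | cons s w ih =>
    obtain ⟨s1 | s1, o⟩ := s
    · simp [strip, ntProj, nts_cons_inl] at ih ⊢; exact ih
    · simp [strip, ntProj, nts_cons_inr, List.filterMap_cons] at ih ⊢; exact ih

lemma ntProj_tw (u : List T) : ntProj (tw u : Word N T) = [] := by
  induction u with
  | nil => rfl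
  | cons t u ih => simpa [tw, ntProj] using ih

lemma ntProj_sent (u v : List T) (Y : Option N) :
    ntProj (sent u Y v) = Y.elim [] (fun y => [y]) := by
  have h1 := ntProj_tw (N := N) u
  have h2 := ntProj_tw (N := N) v
  unfold ntProj at h1 h2 ⊢
  cases Y <;> simp [sent, List.filterMap_append, h1, h2, Option.elim, ntProj]

lemma nts_nil_strip {w : AWord N T} (h : nts w = []) : ∃ u, strip w = tw u := by
  induction w with
  | nil => exact ⟨[], rfl⟩
  | cons s w ih =>
    obtain ⟨s1 | s1, o⟩ := s
    · simp [nts_cons_inl] at h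
    · rcases ih (by simpa [nts_cons_inr] using h) with ⟨u, hu⟩
      exact ⟨s1 :: u, by simp [strip, tw] at hu ⊢; exact hu⟩

lemma nts_single_strip {w : AWord N T} {y : N} {o : ℕ} (h : nts w = [(y, o)]) :
    ∃ u v, strip w = sent u (some y) v := by
  induction w with
  | nil => simp [nts_nil] at h
  | cons s w ih =>
    obtain ⟨s1 | s1, o'⟩ := s
    · rw [nts_cons_inl] at h
      injection h with h1 h2
      injection h1 with hy ho
      rcases nts_nil_strip h2 with ⟨v, hv⟩
      exact ⟨[], v, by simp [strip, sent, tw, Option.elim, hy] at hv ⊢; exact hv⟩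
    · rcases ih (by simpa [nts_cons_inr] using h) with ⟨u, v, huv⟩
      exact ⟨s1 :: u, v, by simp [strip, sent, tw, Option.elim] at huv ⊢; exact huv⟩

/-- simulation relation between annotated words and ranked words -/
def Sim (w : AWord N T) (q : RW N) : Prop :=
  ∃ f : ℕ → ℕ,
    (∀ a ∈ (nts w).map Prod.snd, ∀ b ∈ (nts w).map Prod.snd, (a ≤ b ↔ f a ≤ f b)) ∧
    ((nts w).map (fun x => (x.1, f x.2))).Perm q

lemma dfseq_head_bound {G : CFG N T} {k : ℕ∞} {m : ℕ} {w va : AWord N T}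
    {γjs : List (CProd N T × ℕ)} (h : DFSeq G k m w γjs va) : (ntCountA w : ℕ∞) ≤ k := by
  cases h with
  | refl _ _ h => exact h
  | step h _ _ _ _ => exact h

lemma isVertex_singleton_rank {k : ℕ} {y : N} {r : ℕ} (h : IsVertex k [(y, r)]) : r = 0 := by
  rcases h with ⟨_, hc, _⟩
  rcases hc (y, r) (by simp) 0 (Nat.zero_le r) with ⟨x, hx⟩
  simp at hx
  exact hx.2.symm

lemma newRank_eq_nil {uv : RW N} {i : ℕ} (h : uv = []) : newRank uv i = 0 := by
  simp [newRank, h]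

lemma newRank_eq_same {uv : RW N} {i : ℕ} (h : uv ≠ []) (h1 : ∀ pp ∈ uv, pp.2 ≠ i) :
    newRank uv i = i := by
  simp only [newRank, if_neg h, if_pos h1]

lemma newRank_eq_succ {uv : RW N} {i : ℕ} (h : uv ≠ []) (h1 : ¬ ∀ pp ∈ uv, pp.2 ≠ i) :
    newRank uv i = i + 1 := by
  simp only [newRank, if_neg h, if_neg h1]

lemma isVertex_step {k : ℕ} {u v : RW N} {X : N} {i : ℕ} {l : List N}
    (hq : IsVertex k (u ++ (X, i) :: v))
    (hmax : ∀ x ∈ u ++ (X, i) :: v, x.2 ≤ i)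
    (hlen : (u ++ v ++ l.map (fun Z => (Z, newRank (u ++ v) i))).length ≤ k) :
    IsVertex k (u ++ v ++ l.map (fun Z => (Z, newRank (u ++ v) i))) := by
  obtain ⟨hlen0, hcont, hsort⟩ := hq
  have hmemq : ∀ x : N × ℕ, x ∈ u ++ v → x ∈ u ++ (X, i) :: v := by
    intro x hx; rcases List.mem_append.1 hx with h | h
    · exact List.mem_append.2 (Or.inl h)
    · exact List.mem_append.2 (Or.inr (List.mem_cons_of_mem _ h))
  have hmemq' : ∀ x : N × ℕ, x ∈ u ++ (X, i) :: v → x ≠ (X, i) → x ∈ u ++ v := by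
    intro x hx hne; rcases List.mem_append.1 hx with h | h
    · exact List.mem_append.2 (Or.inl h)
    · rcases List.mem_cons.1 h with h | h
      · exact absurd h hne
      · exact List.mem_append.2 (Or.inr h)
  refine ⟨hlen, ?_, ?_⟩
  · -- contiguous
    by_cases h0 : u ++ v = ([] : RW N)
    · intro p hp j hj
      rw [newRank_eq_nil h0] at hp
      rw [h0] at hp
      simp only [List.nil_append, List.mem_map] at hp
      rcases hp with ⟨z, hz, rfl⟩
      have : j = 0 := Nat.le_zero.1 hj
      subst this
      exact ⟨z, by rw [newRank_eq_nil h0, h0]; simpa using hz⟩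
    · by_cases h1 : ∀ pp ∈ u ++ v, pp.2 ≠ i
      · rw [newRank_eq_same h0 h1]
        intro p hp j hj
        rcases List.mem_append.1 hp with hp | hp
        · have hpi : p.2 < i :=
            lt_of_le_of_ne (hmax p (hmemq p hp)) (h1 p hp)
          rcases hcont p (hmemq p hp) j hj with ⟨x, hx⟩
          have hxne : (x, j) ≠ (X, i) := by
            intro he; injection he with _ he2; omega
          exact ⟨x, List.mem_append.2 (Or.inl (hmemq' _ hx hxne))⟩
        · simp only [List.mem_map] at hp
          rcases hp with ⟨z, hz, rfl⟩
          rcases Nat.lt_or_ge j i with hj' | hj'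
          · rcases hcont (X, i) (by simp) j (le_of_lt hj') with ⟨x, hx⟩
            have hxne : (x, j) ≠ (X, i) := by
              intro he; injection he with _ he2; omega
            exact ⟨x, List.mem_append.2 (Or.inl (hmemq' _ hx hxne))⟩
          · have : j = i := le_antisymm hj hj'
            subst this
            exact ⟨z, List.mem_append.2 (Or.inr (List.mem_map.2 ⟨z, hz, rfl⟩))⟩
      · rw [newRank_eq_succ h0 h1]
        push_neg at h1
        rcases h1 with ⟨z0, hz0, hz0i⟩
        intro p hp j hj
        have key : ∀ j' ≤ i, ∃ x, (x, j') ∈ u ++ v := by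
          intro j' hj'
          rcases hcont (X, i) (by simp) j' hj' with ⟨x, hx⟩
          by_cases hxe : ((x, j') : N × ℕ) = (X, i)
          · refine ⟨z0.1, ?_⟩
            injection hxe with _ h2
            have : (z0.1, j') = z0 := by rw [h2, ← hz0i]
            rw [this]; exact hz0
          · exact ⟨x, hmemq' _ hx hxe⟩
        rcases List.mem_append.1 hp with hp | hp
        · have : j ≤ i := le_trans hj (hmax p (hmemq p hp))
          rcases key j this with ⟨x, hx⟩
          exact ⟨x, List.mem_append.2 (Or.inl hx)⟩
        · simp only [List.mem_map] at hp
          rcases hp with ⟨z, hz, rfl⟩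
          rcases Nat.lt_or_ge j (i + 1) with hj' | hj'
          · rcases key j (Nat.lt_succ_iff.1 hj') with ⟨x, hx⟩
            exact ⟨x, List.mem_append.2 (Or.inl hx)⟩
          · have : j = i + 1 := le_antisymm hj hj'
            subst this
            exact ⟨z, List.mem_append.2 (Or.inr (List.mem_map.2 ⟨z, hz, rfl⟩))⟩
  · -- sorted
    rw [List.map_append, List.pairwise_append]
    refine ⟨?_, ?_, ?_⟩
    · have hsub : (u ++ v).Sublist (u ++ (X, i) :: v) :=
        List.Sublist.append_left (List.sublist_cons_self _ _) u
      exact List.Pairwise.sublist (hsub.map Prod.snd) hsort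
    · have : (l.map (fun Z => (Z, newRank (u ++ v) i))).map Prod.snd =
        List.replicate l.length (newRank (u ++ v) i) := by
        rw [List.map_map]; exact List.map_const'
      rw [this]
      exact List.pairwise_replicate.2 (Or.inr le_rfl)
    · intro a ha b hb
      by_cases h0 : u ++ v = ([] : RW N)
      · rw [h0] at ha; simp at ha
      · rcases List.mem_map.1 ha with ⟨x, hx, rfl⟩
        rcases List.mem_map.1 hb with ⟨z, hz, rfl⟩
        have h2 : x.2 ≤ i := hmax x (hmemq x hx)
        have h4 : z.2 = newRank (u ++ v) i := by
          rcases List.mem_map.1 hz with ⟨z', _, rfl⟩; rfl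
        have h3 : i ≤ newRank (u ++ v) i := by
          by_cases h1 : ∀ pp ∈ u ++ v, pp.2 ≠ i
          · rw [newRank_eq_same h0 h1]
          · rw [newRank_eq_succ h0 h1]; omega
        omega

lemma sim_step {w : AWord N T} {u v : RW N} {p : CProd N T} {j o m : ℕ} {f : ℕ → ℕ}
    (hget : w[j]? = some (Sum.inl p.1, o))
    (hbnd : ∀ s ∈ w, s.2 ≤ m)
    (hiff : ∀ a ∈ (nts w).map Prod.snd, ∀ b ∈ (nts w).map Prod.snd, (a ≤ b ↔ f a ≤ f b))
    (hperm : ((nts w).map (fun x => (x.1, f x.2))).Perm (u ++ (p.1, f o) :: v))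
    (hmaxw : ∀ s ∈ nts w, s.2 ≤ o) :
    Sim (applyProdA p j (m + 1) w)
      (u ++ v ++ (ntProj p.2).map (fun Z => (Z, newRank (u ++ v) (f o)))) := by
  set g : N × ℕ → N × ℕ := fun x => (x.1, f x.2) with hg
  set A := nts (w.take j) with hA
  set B := nts (w.drop (j + 1)) with hB
  have hdecomp : w = w.take j ++ (Sum.inl p.1, o) :: w.drop (j + 1) := decomp_at hget
  have hnts : nts w = A ++ (p.1, o) :: B := by
    conv_lhs => rw [hdecomp]
    rw [nts_append, nts_cons_inl]
  have hABw : ∀ s ∈ A ++ B, s ∈ nts w ∧ s.2 ≤ m := by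
    intro s hs
    have hsw : s ∈ nts w := by
      rw [hnts]
      rcases List.mem_append.1 hs with h | h
      · exact List.mem_append.2 (Or.inl h)
      · exact List.mem_append.2 (Or.inr (List.mem_cons_of_mem _ h))
    refine ⟨hsw, ?_⟩
    obtain ⟨x, a⟩ := s
    exact hbnd _ (mem_nts.1 hsw)
  have ho_mem : (p.1, o) ∈ nts w := by rw [hnts]; simp
  have ho_pres : o ∈ (nts w).map Prod.snd := List.mem_map.2 ⟨(p.1, o), ho_mem, rfl⟩
  have hpres : ∀ s ∈ nts w, s.2 ∈ (nts w).map Prod.snd :=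
    fun s hs => List.mem_map.2 ⟨s, hs, rfl⟩
  have hfo_le : ∀ s ∈ nts w, f s.2 ≤ f o :=
    fun s hs => (hiff _ (hpres s hs) _ ho_pres).1 (hmaxw s hs)
  have hinj : ∀ a ∈ (nts w).map Prod.snd, ∀ b ∈ (nts w).map Prod.snd, f a = f b → a = b := by
    intro a ha b hb hfab
    have h1 := (hiff a ha b hb).2 (le_of_eq hfab)
    have h2 := (hiff b hb a ha).2 (le_of_eq hfab.symm)
    omega
  have hcancel : ((A ++ B).map g).Perm (u ++ v) := by
    have hmg : (nts w).map g = A.map g ++ (p.1, f o) :: B.map g := by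
      rw [hnts, List.map_append, List.map_cons]
    have h1 : ((p.1, f o) :: (A.map g ++ B.map g)).Perm ((p.1, f o) :: (u ++ v)) := by
      refine List.Perm.trans List.perm_middle.symm ?_
      refine List.Perm.trans ?_ List.perm_middle
      rw [← hmg]; exact hperm
    rw [List.map_append]
    exact h1.cons_inv
  have hw' : nts (applyProdA p j (m + 1) w) =
      A ++ (ntProj p.2).map (fun Z => (Z, m + 1)) ++ B := nts_applyProdA p j (m + 1) w
  set i' := newRank (u ++ v) (f o) with hi'
  set f' : ℕ → ℕ := fun a => if a = m + 1 then i' else f a with hf'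
  have hf'old : ∀ a ≤ m, f' a = f a := by
    intro a ha; simp only [hf']; rw [if_neg (by omega)]
  have hf'new : f' (m + 1) = i' := by simp [hf']
  have h_old_lt : ∀ s ∈ A ++ B, f s.2 < i' := by
    intro s hs
    obtain ⟨hsw, _⟩ := hABw s hs
    by_cases h0 : u ++ v = ([] : RW N)
    · exfalso
      have : ((A ++ B).map g).length = 0 := by rw [hcancel.length_eq, h0]; rfl
      rw [List.length_map] at this
      rw [List.length_eq_zero_iff.1 this] at hs
      exact List.not_mem_nil hs
    · by_cases h1 : ∀ pp ∈ u ++ v, pp.2 ≠ f o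
      · rw [hi', newRank_eq_same h0 h1]
        refine lt_of_le_of_ne (hfo_le s hsw) ?_
        intro heq
        have hso : s.2 = o := hinj _ (hpres s hsw) _ ho_pres heq
        have : g s ∈ u ++ v := hcancel.mem_iff.1 (List.mem_map.2 ⟨s, hs, rfl⟩)
        exact h1 (g s) this (by simp [hg, heq])
      · rw [hi', newRank_eq_succ h0 h1]
        exact Nat.lt_succ_of_le (hfo_le s hsw)
  have hchar : ∀ a ∈ (nts (applyProdA p j (m + 1) w)).map Prod.snd,
      a = m + 1 ∨ ∃ s ∈ A ++ B, s.2 = a := by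
    rw [hw']
    intro a ha
    rcases List.mem_map.1 ha with ⟨x, hx, rfl⟩
    rcases List.mem_append.1 hx with hx | hx
    · rcases List.mem_append.1 hx with hx | hx
      · exact Or.inr ⟨x, List.mem_append.2 (Or.inl hx), rfl⟩
      · rcases List.mem_map.1 hx with ⟨z, _, rfl⟩
        exact Or.inl rfl
    · exact Or.inr ⟨x, List.mem_append.2 (Or.inr hx), rfl⟩
  refine ⟨f', ?_, ?_⟩
  · intro a ha b hb
    rcases hchar a ha with rfl | ⟨s, hs, rfl⟩ <;> rcases hchar b hb with hb' | ⟨t, ht, rfl⟩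
    · rw [hb']; simp
    · obtain ⟨htw, htm⟩ := hABw t ht
      rw [hf'new, hf'old _ htm]
      have := h_old_lt t ht
      constructor <;> intro h <;> omega
    · subst hb'
      obtain ⟨hsw, hsm⟩ := hABw s hs
      rw [hf'new, hf'old _ hsm]
      have := h_old_lt s hs
      constructor <;> intro h <;> omega
    · obtain ⟨hsw, hsm⟩ := hABw s hs
      obtain ⟨htw, htm⟩ := hABw t ht
      rw [hf'old _ hsm, hf'old _ htm]
      exact hiff _ (hpres s hsw) _ (hpres t htw)
  · rw [hw']
    have hmapA : A.map (fun x => (x.1, f' x.2)) = A.map g := by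
      apply List.map_congr_left
      intro s hs
      obtain ⟨_, hsm⟩ := hABw s (List.mem_append.2 (Or.inl hs))
      simp [hg, hf'old _ hsm]
    have hmapB : B.map (fun x => (x.1, f' x.2)) = B.map g := by
      apply List.map_congr_left
      intro s hs
      obtain ⟨_, hsm⟩ := hABw s (List.mem_append.2 (Or.inr hs))
      simp [hg, hf'old _ hsm]
    have hmapN : ((ntProj p.2).map (fun Z => (Z, m + 1))).map (fun x => (x.1, f' x.2)) =
        (ntProj p.2).map (fun Z => (Z, i')) := by
      rw [List.map_map]
      apply List.map_congr_left
      intro Z _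
      simp [hf'new]
    rw [List.map_append, List.map_append, hmapA, hmapB, hmapN]
    have step1 : (A.map g ++ (ntProj p.2).map (fun Z => (Z, i')) ++ B.map g).Perm
        (A.map g ++ B.map g ++ (ntProj p.2).map (fun Z => (Z, i'))) := by
      rw [List.append_assoc, List.append_assoc]
      exact List.Perm.append_left _ (List.perm_append_comm)
    have step2 : (A.map g ++ B.map g ++ (ntProj p.2).map (fun Z => (Z, i'))).Perm
        (u ++ v ++ (ntProj p.2).map (fun Z => (Z, i'))) := by
      rw [← List.map_append]
      exact hcancel.append_right _
    exact step1.trans step2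

lemma zip_fst_snd {α β : Type} (l : List (α × β)) :
    (l.map Prod.fst).zip (l.map Prod.snd) = l := by
  induction l with
  | nil => rfl
  | cons x l ih => simp [ih]

lemma sim_start (X : N) : Sim (annot ([Sum.inl X] : Word N T)) [(X, 0)] :=
  ⟨id, by
    intro a ha b hb
    simp [annot, nts_cons_inl, nts_nil] at ha hb
    subst ha; subst hb; simp,
    by exact List.Perm.refl _⟩

lemma isVertex_start {k : ℕ} (hk : 0 < k) (X : N) : IsVertex k [(X, 0)] := by
  refine ⟨by simp; omega, ?_, by simp⟩
  intro p hp j hj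
  simp at hp
  subst hp
  have : j = 0 := Nat.le_zero.1 hj
  subst this
  exact ⟨X, by simp⟩

lemma forward_sim {G : CFG N T} {k : ℕ} {m : ℕ} {w va : AWord N T}
    {γjs : List (CProd N T × ℕ)} (hseq : DFSeq G (k : ℕ∞) m w γjs va) :
    ∀ q : RW N, Sim w q → IsVertex k q → (∀ s ∈ w, s.2 ≤ m) →
      ∃ q', GPath (Edge G k) q (γjs.map Prod.fst) q' ∧ Sim va q' ∧ IsVertex k q' := by
  induction hseq with
  | refl m u hcnt =>
    intro q hsim hV _
    exact ⟨q, GPath.refl q, hsim, hV⟩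
  | @step m u vfin p j o rest hcnt hprod hget hdf hrest ih =>
    intro q hsim hV hbnd
    obtain ⟨f, hiff, hperm0⟩ := hsim
    have ho_mem : (p.1, o) ∈ nts u := mem_nts.2 (List.mem_of_getElem? hget)
    have ho_pres : o ∈ (nts u).map Prod.snd := List.mem_map.2 ⟨(p.1, o), ho_mem, rfl⟩
    have hmaxw : ∀ s ∈ nts u, s.2 ≤ o := by
      intro s hs
      obtain ⟨x, a⟩ := s
      rcases mem_nts_exists_get hs with ⟨idx, hidx⟩
      exact hdf idx x a hidx _ o hget
    have hq_mem : (p.1, f o) ∈ q :=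
      hperm0.subset (List.mem_map.2 ⟨(p.1, o), ho_mem, rfl⟩)
    rcases List.append_of_mem hq_mem with ⟨u1, v1, hq⟩
    subst hq
    have hmaxq : ∀ x ∈ u1 ++ (p.1, f o) :: v1, x.2 ≤ f o := by
      intro x hx
      have hx' : x ∈ (nts u).map (fun s => (s.1, f s.2)) := hperm0.symm.subset hx
      rcases List.mem_map.1 hx' with ⟨s, hsw, rfl⟩
      exact (hiff s.2 (List.mem_map.2 ⟨s, hsw, rfl⟩) o ho_pres).1 (hmaxw s hsw)
    have hsim' : Sim (applyProdA p j (m + 1) u)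
        (u1 ++ v1 ++ (ntProj p.2).map (fun Z => (Z, newRank (u1 ++ v1) (f o)))) :=
      sim_step hget hbnd hiff hperm0 hmaxw
    obtain ⟨f2, hiff2, hperm2⟩ := hsim'
    have hcnt' : ntCountA (applyProdA p j (m + 1) u) ≤ k := by
      have := dfseq_head_bound hrest
      exact_mod_cast this
    have hlen' :
        (u1 ++ v1 ++ (ntProj p.2).map (fun Z => (Z, newRank (u1 ++ v1) (f o)))).length ≤ k := by
      rw [← hperm2.length_eq, List.length_map, ← ntCountA_eq]
      exact hcnt'
    have hV' : IsVertex k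
        (u1 ++ v1 ++ (ntProj p.2).map (fun Z => (Z, newRank (u1 ++ v1) (f o)))) :=
      isVertex_step hV hmaxq hlen'
    have hbnd' : ∀ s ∈ applyProdA p j (m + 1) u, s.2 ≤ m + 1 := by
      intro s hs
      simp only [applyProdA, List.mem_append, List.mem_map] at hs
      rcases hs with (hs | ⟨z, _, rfl⟩) | hs
      · exact le_trans (hbnd s (List.take_subset _ _ hs)) (Nat.le_succ m)
      · exact le_rfl
      · exact le_trans (hbnd s (List.drop_subset _ _ hs)) (Nat.le_succ m)
    rcases ih _ ⟨f2, hiff2, hperm2⟩ hV' hbnd' with ⟨q'', hpath, hsimf, hVf⟩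
    refine ⟨q'', GPath.step ?_ hpath, hsimf, hVf⟩
    exact ⟨hprod, hV, hV', u1, v1, f o,
      by rw [List.append_assoc, List.singleton_append], hmaxq, rfl⟩

lemma backward_sim {G : CFG N T} {k : ℕ} {q : RW N} {γ : List (CProd N T)} {qf : RW N}
    (hpath : GPath (Edge G k) q γ qf) :
    ∀ (m : ℕ) (w : AWord N T), Sim w q → (∀ s ∈ w, s.2 ≤ m) →
      (ntCountA w : ℕ∞) ≤ (k : ℕ∞) →
      ∃ (γjs : List (CProd N T × ℕ)) (va : AWord N T),
        γjs.map Prod.fst = γ ∧ DFSeq G (k : ℕ∞) m w γjs va ∧ Sim va qf := by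
  induction hpath with
  | refl v =>
    intro m w hsim hbnd hcnt
    exact ⟨[], w, rfl, DFSeq.refl m w hcnt, hsim⟩
  | @step q q1 q2 e es hedge hrest ih =>
    intro m w hsim hbnd hcnt
    obtain ⟨hprod, hVq, hVq1, u1, v1, i, hsplit, hmaxq, hq1⟩ := hedge
    rw [List.append_assoc, List.singleton_append] at hsplit
    obtain ⟨f, hiff, hperm⟩ := hsim
    rw [hsplit] at hperm hmaxq
    have hi_mem : (e.1, i) ∈ (nts w).map (fun x => (x.1, f x.2)) :=
      hperm.symm.subset (by simp)
    rcases List.mem_map.1 hi_mem with ⟨⟨x, o⟩, hso, heq⟩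
    injection heq with hx hfo
    subst hx
    rcases mem_nts_exists_get hso with ⟨j, hget⟩
    have ho_pres : o ∈ (nts w).map Prod.snd := List.mem_map.2 ⟨(e.1, o), hso, rfl⟩
    have hmaxw : ∀ s ∈ nts w, s.2 ≤ o := by
      intro s hs
      have hmem : (s.1, f s.2) ∈ u1 ++ (e.1, i) :: v1 :=
        hperm.subset (List.mem_map.2 ⟨s, hs, rfl⟩)
      have h1 : f s.2 ≤ i := hmaxq _ hmem
      rw [← hfo] at h1
      exact (hiff s.2 (List.mem_map.2 ⟨s, hs, rfl⟩) o ho_pres).2 h1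
    have hdf : dfOK w j := by
      intro idx x' o' hidx s' oj hj'
      have he := hget.symm.trans hj'
      injection he with he
      injection he with _ he2
      rw [← he2]
      exact hmaxw (x', o') (mem_nts.2 (List.mem_of_getElem? hidx))
    rw [← hfo] at hperm
    have hsim1 : Sim (applyProdA e j (m + 1) w)
        (u1 ++ v1 ++ (ntProj e.2).map (fun Z => (Z, newRank (u1 ++ v1) (f o)))) :=
      sim_step hget hbnd hiff hperm hmaxw
    rw [← hfo] at hq1
    rw [← hq1] at hsim1
    obtain ⟨f2, hiff2, hperm2⟩ := hsim1
    have hcnt1 : (ntCountA (applyProdA e j (m + 1) w) : ℕ∞) ≤ (k : ℕ∞) := by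
      have : ntCountA (applyProdA e j (m + 1) w) ≤ k := by
        rw [ntCountA_eq, ← List.length_map (as := nts (applyProdA e j (m + 1) w))
          (f := fun x => (x.1, f2 x.2)), hperm2.length_eq]
        exact hVq1.1
      exact_mod_cast this
    have hbnd1 : ∀ s ∈ applyProdA e j (m + 1) w, s.2 ≤ m + 1 := by
      intro s hs
      simp only [applyProdA, List.mem_append, List.mem_map] at hs
      rcases hs with (hs | ⟨z, _, rfl⟩) | hs
      · exact le_trans (hbnd s (List.take_subset _ _ hs)) (Nat.le_succ m)
      · exact le_rfl
      · exact le_trans (hbnd s (List.drop_subset _ _ hs)) (Nat.le_succ m)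
    rcases ih (m + 1) _ ⟨f2, hiff2, hperm2⟩ hbnd1 hcnt1 with ⟨γjs, va, hmap, hseq, hsimf⟩
    exact ⟨(e, j) :: γjs, va, by simp [hmap],
      DFSeq.step hcnt hprod hget hdf hseq, hsimf⟩

lemma map_eq_singleton {α β : Type} {f : α → β} {l : List α} {b : β} (h : l.map f = [b]) :
    ∃ a, l = [a] ∧ f a = b := by
  cases l with
  | nil => simp at h
  | cons a t =>
    rw [List.map_cons] at h
    injection h with h1 h2
    exact ⟨a, by rw [List.map_eq_nil_iff.1 h2], h1⟩

end Aux

/-- Lemma 1, first part: for a grammar whose productions have at most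
two terminals and two nonterminals on their right-hand sides, and `k > 0`:
`γ ∈ Γ^{df(k)}_{X,Y}(G)` iff the graph `A^{df(k)}_G` has a path from `X^⟨0⟩` to `Y^⟨0⟩`
(to the empty ranked word when `Y = ε`) labeled by `γ`. -/
theorem gammaDF_iff_path {N T : Type} (G : CFG N T)
    (hG : ∀ p ∈ G.prods, tCount p.2 ≤ 2 ∧ ntCount p.2 ≤ 2)
    (k : ℕ) (hk : 0 < k) (X : N) (Y : Option N) (γ : List (CProd N T)) :
    γ ∈ GammaDF G k X Y ↔
      GPath (Edge G k) [(X, 0)] γ (Y.elim ([] : RW N) (fun y => [(y, 0)])) := by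
  have hbnd0 : ∀ s ∈ annot ([Sum.inl X] : Word N T), s.2 ≤ 0 := by
    intro s hs
    simp [annot] at hs
    simp [hs]
  constructor
  · rintro ⟨uu, vv, js, va, hlen, hseq, hstrip⟩
    obtain ⟨q', hpath, hsimf, hVf⟩ :=
      forward_sim hseq [(X, 0)] (sim_start X) (isVertex_start hk X) hbnd0
    have hlab : (γ.zip js).map Prod.fst = γ := List.map_fst_zip (le_of_eq hlen.symm)
    rw [hlab] at hpath
    obtain ⟨f, _, hperm⟩ := hsimf
    have hfst : (nts va).map Prod.fst = Y.elim [] (fun y => [y]) := by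
      rw [← ntProj_strip, hstrip, ntProj_sent]
    cases Y with
    | none =>
      simp only [Option.elim] at hfst ⊢
      have hnil : nts va = [] := List.map_eq_nil_iff.1 hfst
      rw [hnil, List.map_nil] at hperm
      have hqe : q' = [] := List.Perm.eq_nil hperm.symm
      rw [hqe] at hpath
      exact hpath
    | some y =>
      simp only [Option.elim] at hfst ⊢
      obtain ⟨z, hz, hzy⟩ := map_eq_singleton hfst
      rw [hz, List.map_cons, List.map_nil] at hperm
      have hq' : q' = [(z.1, f z.2)] := (List.perm_singleton.1 hperm.symm)
      have h0 : f z.2 = 0 := isVertex_singleton_rank (hq' ▸ hVf)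
      rw [hq', h0, hzy] at hpath
      exact hpath
  · intro hpath
    have hcnt0 : (ntCountA (annot ([Sum.inl X] : Word N T)) : ℕ∞) ≤ (k : ℕ∞) := by
      have h1 : ntCountA (annot ([Sum.inl X] : Word N T)) = 1 := rfl
      rw [h1]
      exact_mod_cast hk
    obtain ⟨γjs, va, hmap, hseq, hsimf⟩ :=
      backward_sim hpath 0 (annot [Sum.inl X]) (sim_start X) hbnd0 hcnt0
    have hzip : γ.zip (γjs.map Prod.snd) = γjs := by
      rw [← hmap, zip_fst_snd]
    have hlen : (γjs.map Prod.snd).length = γ.length := by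
      rw [← hmap]; simp
    obtain ⟨f, _, hperm⟩ := hsimf
    cases Y with
    | none =>
      simp only [Option.elim] at hperm
      have hmn : (nts va).map (fun x => (x.1, f x.2)) = [] := hperm.eq_nil
      have hnil : nts va = [] := List.map_eq_nil_iff.1 hmn
      obtain ⟨uu, hstrip⟩ := nts_nil_strip hnil
      refine ⟨uu, [], γjs.map Prod.snd, va, hlen, by rw [hzip]; exact hseq, ?_⟩
      rw [hstrip]
      simp [sent, tw, Option.elim]
    | some y =>
      simp only [Option.elim] at hperm
      have hms : (nts va).map (fun x => (x.1, f x.2)) = [(y, 0)] :=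
        List.perm_singleton.1 hperm
      obtain ⟨z, hz, hzy⟩ := map_eq_singleton hms
      have hz1 : z.1 = y := congrArg Prod.fst hzy
      have hzz : nts va = [(y, z.2)] := by rw [hz, ← hz1]
      obtain ⟨uu, vv, hstrip⟩ := nts_single_strip hzz
      exact ⟨uu, vv, γjs.map Prod.snd, va, hlen, by rw [hzip]; exact hseq, hstrip⟩

end Paper
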